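/- Let G = {g_t : t ∈ [0, ∞)} ⊆ Γ satisfy g_t ≤ a·g_{t₁} + (1−a)·g_{t₂} pointwise whenever 0 ≤ a ≤ 1 and t ≥ a·t₁ + (1−a)·t₂. Then the function F : [0, ∞) → ℝ defined by F(t) = π_X(g_t(X)/(X ∧ 1)) is real-valued, nonnegative, nonincreasing and convex. -/

import Mathlib

open scoped ENNReal

/-- A regular stochastic order on `F(Ω)`: a reflexive and transitive binary relation
satisfying (TRIV), (CONE), (CERT), (APPR) and (REST). -/
def IsRegularOrder {Ω : Type*} (R : (Ω → ℝ) → (Ω → ℝ) → Prop) : Prop :=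
  Reflexive R ∧ Transitive R ∧
  ¬ R 0 1 ∧
  (∀ f₁ g₁ f₂ g₂ : Ω → ℝ, ∀ a₁ a₂ : ℝ, R f₁ g₁ → R f₂ g₂ → 0 ≤ a₁ → 0 ≤ a₂ →
    R (a₁ • f₁ + a₂ • f₂) (a₁ • g₁ + a₂ • g₂)) ∧
  (∀ f : Ω → ℝ, (0 : Ω → ℝ) ≤ f → R f 0) ∧
  (∀ f : Ω → ℝ, (∀ n : ℕ, R (f + fun _ => (2 : ℝ)⁻¹ ^ n) 0) → R f 0) ∧
  (∀ (f : Ω → ℝ) (A : Set Ω), R f 0 → R (A.indicator f) 0)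

/-- `f_* = sup {a : ℝ | f ≽ a}`, valued in `EReal` (so `⊥` if no such `a` exists). -/
noncomputable def starLow {Ω : Type*} (R : (Ω → ℝ) → (Ω → ℝ) → Prop) (f : Ω → ℝ) : EReal :=
  sSup {y : EReal | ∃ a : ℝ, y = (a : EReal) ∧ R f fun _ => a}

/-- `f^* = -(-f)_*`. -/
noncomputable def starHigh {Ω : Type*} (R : (Ω → ℝ) → (Ω → ℝ) → Prop) (f : Ω → ℝ) : EReal :=
  - starLow R (-f)

/-- Membership in `Γ`: convex nonnegative functions on `[0,∞)` vanishing at `0` with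
finite asymptotic slope `lim g(n)/n < ∞`. -/
def MemGamma (g : ℝ → ℝ) : Prop :=
  ConvexOn ℝ (Set.Ici 0) g ∧ (∀ x : ℝ, 0 ≤ x → 0 ≤ g x) ∧ g 0 = 0 ∧
    ∃ L : ℝ, Filter.Tendsto (fun n : ℕ => g n / n) Filter.atTop (nhds L)

/-- The set of admissible option strategies `Θ_X`: finitely supported nonnegative
functions on the set `K` of strike prices. -/
def ThetaX (K : Set ℝ) : Set (ℝ →₀ ℝ) :=
  {θ | ↑θ.support ⊆ K ∧ ∀ k, 0 ≤ θ k}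

/-- Cost of an option strategy. -/
noncomputable def optCost (qX : ℝ → ℝ) (θ : ℝ →₀ ℝ) : ℝ :=
  θ.sum fun k x => x * qX k

/-- Payoff of an option strategy. -/
noncomputable def optPayoff {Ω : Type*} (X : Ω → ℝ) (θ : ℝ →₀ ℝ) : Ω → ℝ :=
  fun ω => θ.sum fun k x => x * max (X ω - k) 0

/-- The option super-hedging functional (with numéraire `X ∧ 1`):
`π_X(h) = inf {λ q(θ) : λ > 0, θ ∈ Θ_X, λ X(θ)/(X ∧ 1) ≽ h}`. -/
noncomputable def piX {Ω : Type*} (R : (Ω → ℝ) → (Ω → ℝ) → Prop)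
    (X : Ω → ℝ) (K : Set ℝ) (qX : ℝ → ℝ) (h : Ω → ℝ) : EReal :=
  sInf {y : EReal | ∃ (l : ℝ) (θ : ℝ →₀ ℝ), 0 < l ∧ θ ∈ ThetaX K ∧
    R (fun ω => l * optPayoff X θ ω / min (X ω) 1) h ∧
    y = ((l * optCost qX θ : ℝ) : EReal)}

lemma regOrder_ge_imp {Ω : Type*} {R : (Ω → ℝ) → (Ω → ℝ) → Prop}
    (hR : IsRegularOrder R) {f h : Ω → ℝ} (hle : ∀ ω, h ω ≤ f ω) : R f h := by
  obtain ⟨hrefl, htrans, -, hcone, hcert, -, -⟩ := hR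
  have h1 : R (f - h) 0 := hcert _ (fun ω => by simpa using sub_nonneg.2 (hle ω))
  have h2 := hcone (f - h) 0 h h 1 1 h1 (hrefl h) zero_le_one zero_le_one
  simpa using h2

lemma regOrder_trans_le {Ω : Type*} {R : (Ω → ℝ) → (Ω → ℝ) → Prop}
    (hR : IsRegularOrder R) {f h₁ h₂ : Ω → ℝ} (hle : ∀ ω, h₂ ω ≤ h₁ ω)
    (hf : R f h₁) : R f h₂ :=
  hR.2.1 hf (regOrder_ge_imp hR hle)

lemma gamma_linear_bound {g : ℝ → ℝ} (hconv : ConvexOn ℝ (Set.Ici 0) g)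
    (h0 : g 0 = 0) {L : ℝ}
    (hL : Filter.Tendsto (fun n : ℕ => g n / n) Filter.atTop (nhds L)) :
    ∀ x : ℝ, 0 ≤ x → g x ≤ max L 0 * x := by
  intro x hx
  rcases hx.eq_or_lt with rfl | hx
  · simp [h0]
  · have key : ∀ n : ℕ, x ≤ n → g x / x ≤ g n / n := by
      intro n hn
      have hn0 : (0:ℝ) < n := lt_of_lt_of_le hx hn
      have hcomb := hconv.2 (Set.mem_Ici.2 hn0.le) (Set.mem_Ici.2 (le_refl (0:ℝ)))
        (show (0:ℝ) ≤ x / (n:ℝ) from div_nonneg hx.le hn0.le)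
        (show (0:ℝ) ≤ 1 - x / (n:ℝ) from by
          rw [sub_nonneg]; exact div_le_one_of_le₀ hn hn0.le)
        (show x / (n:ℝ) + (1 - x / (n:ℝ)) = 1 from by ring)
      rw [smul_eq_mul, smul_eq_mul, smul_eq_mul, smul_eq_mul] at hcomb
      have hx' : x / (n:ℝ) * (n:ℝ) + (1 - x / (n:ℝ)) * 0 = x := by field_simp; ring
      rw [hx', h0, mul_zero, add_zero] at hcomb
      rw [div_le_div_iff₀ hx hn0]
      calc g x * n ≤ (x / n * g n) * n := by nlinarith
        _ = g n * x := by field_simp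
    have hLge : g x / x ≤ L := by
      refine ge_of_tendsto hL ?_
      filter_upwards [Filter.eventually_ge_atTop ⌈x⌉₊] with n hn
      exact key n (le_trans (Nat.le_ceil x) (by exact_mod_cast hn))
    calc g x ≤ L * x := (div_le_iff₀ hx).mp hLge
      _ ≤ max L 0 * x := mul_le_mul_of_nonneg_right (le_max_left _ _) hx.le

lemma optPayoff_eq {Ω : Type*} (X : Ω → ℝ) (θ : ℝ →₀ ℝ) (ω : Ω) :
    optPayoff X θ ω = Finsupp.linearCombination ℝ (fun k => max (X ω - k) 0) θ := by
  rw [Finsupp.linearCombination_apply]; rfl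

lemma optCost_eq (qX : ℝ → ℝ) (θ : ℝ →₀ ℝ) :
    optCost qX θ = Finsupp.linearCombination ℝ qX θ := by
  rw [Finsupp.linearCombination_apply]; rfl

lemma optPayoff_smul_add {Ω : Type*} (X : Ω → ℝ) (c d : ℝ) (θ₁ θ₂ : ℝ →₀ ℝ) (ω : Ω) :
    optPayoff X (c • θ₁ + d • θ₂) ω = c * optPayoff X θ₁ ω + d * optPayoff X θ₂ ω := by
  simp [optPayoff_eq, map_add, map_smul]

lemma optCost_smul_add (qX : ℝ → ℝ) (c d : ℝ) (θ₁ θ₂ : ℝ →₀ ℝ) :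
    optCost qX (c • θ₁ + d • θ₂) = c * optCost qX θ₁ + d * optCost qX θ₂ := by
  simp [optCost_eq, map_add, map_smul]


/-- For a convex family `G = {g_t}` the call-price function
`F(t) = π_X(g_t(X)/(X∧1))` is real valued, nonnegative, nonincreasing and convex
on `[0,∞)`. -/
theorem stmt_16 {Ω : Type*} [Nonempty Ω]
    (R : (Ω → ℝ) → (Ω → ℝ) → Prop) (hR : IsRegularOrder R)
    (X : Ω → ℝ) (hXpos : ∀ ω, 0 < X ω)
    (Xstar : ℝ) (hXstar : starHigh R X = (Xstar : EReal))
    (htail : ∀ x : ℝ, 0 ≤ x →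
      starHigh R (fun ω => ({ω' | X ω' ≤ x}).indicator X ω) = ((min x Xstar : ℝ) : EReal))
    (K : Set ℝ) (hK0 : (0 : ℝ) ∈ K)
    (qX : ℝ → ℝ) (hqX : ∀ k ∈ K, 0 ≤ qX k)
    (g : ℝ → ℝ → ℝ)
    (hg : ∀ t : ℝ, 0 ≤ t → MemGamma (g t))
    (hgG : ∀ (a t₁ t₂ t : ℝ), 0 ≤ a → a ≤ 1 → 0 ≤ t₁ → 0 ≤ t₂ →
      a * t₁ + (1 - a) * t₂ ≤ t → ∀ x : ℝ, 0 ≤ x → g t x ≤ a * g t₁ x + (1 - a) * g t₂ x) :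
    ∃ F : ℝ → ℝ,
      (∀ t : ℝ, 0 ≤ t →
        piX R X K qX (fun ω => g t (X ω) / min (X ω) 1) = ((F t : ℝ) : EReal)) ∧
      (∀ t : ℝ, 0 ≤ t → 0 ≤ F t) ∧
      (∀ s t : ℝ, 0 ≤ s → s ≤ t → F t ≤ F s) ∧
      ConvexOn ℝ (Set.Ici 0) F := by
  classical
  have hmin : ∀ ω, 0 < min (X ω) 1 := fun ω => lt_min (hXpos ω) one_pos
  set S : ℝ → Set EReal := fun t =>
    {y : EReal | ∃ (l : ℝ) (θ : ℝ →₀ ℝ), 0 < l ∧ θ ∈ ThetaX K ∧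
      R (fun ω => l * optPayoff X θ ω / min (X ω) 1)
        (fun ω => g t (X ω) / min (X ω) 1) ∧
      y = ((l * optCost qX θ : ℝ) : EReal)} with hS
  have hpiX : ∀ t : ℝ, piX R X K qX (fun ω => g t (X ω) / min (X ω) 1) = sInf (S t) :=
    fun t => rfl
  -- costs are nonnegative
  have hcost : ∀ θ ∈ ThetaX K, 0 ≤ optCost qX θ := by
    intro θ hθ
    refine Finset.sum_nonneg fun k hk => ?_
    exact mul_nonneg (hθ.2 k) (hqX k (hθ.1 (Finset.mem_coe.2 hk)))
  have hSnn : ∀ t : ℝ, ∀ y ∈ S t, (0 : EReal) ≤ y := by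
    rintro t y ⟨l, θ, hl, hθ, -, rfl⟩
    exact_mod_cast mul_nonneg hl.le (hcost θ hθ)
  -- every S t (t ≥ 0) contains a finite element
  have hmemS : ∀ t : ℝ, 0 ≤ t → ∃ c : ℝ, (c : EReal) ∈ S t := by
    intro t ht
    obtain ⟨hconv, hnn, h0, L, hL⟩ := hg t ht
    set M : ℝ := max L 0 + 1 with hM
    have hM0 : 0 < M := by positivity
    have hbound : ∀ x : ℝ, 0 ≤ x → g t x ≤ M * x := fun x hx =>
      (gamma_linear_bound hconv h0 hL x hx).trans
        (mul_le_mul_of_nonneg_right (by simp [hM]) hx)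
    refine ⟨M * optCost qX (Finsupp.single 0 1), M, Finsupp.single 0 1, hM0, ?_, ?_, rfl⟩
    · constructor
      · intro k hk
        have hk' : k ∈ ({0} : Finset ℝ) :=
          Finsupp.support_single_subset (by exact_mod_cast hk)
        simp only [Finset.mem_singleton] at hk'
        simpa [hk'] using hK0
      · intro k
        rw [Finsupp.single_apply]
        split <;> norm_num
    · refine regOrder_ge_imp hR fun ω => ?_
      have hp : optPayoff X (Finsupp.single 0 1) ω = X ω := by
        rw [optPayoff]
        rw [Finsupp.sum_single_index (by simp)]
        simp [max_eq_left (hXpos ω).le]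
      rw [hp]
      have := hbound (X ω) (hXpos ω).le
      gcongr
      exact (hmin ω).le
  -- sInf (S t) is a finite real for t ≥ 0
  have hfin : ∀ t : ℝ, 0 ≤ t → sInf (S t) ≠ ⊤ ∧ sInf (S t) ≠ ⊥ := by
    intro t ht
    obtain ⟨c, hc⟩ := hmemS t ht
    constructor
    · exact ne_top_of_le_ne_top (EReal.coe_ne_top c) (sInf_le hc)
    · intro hbot
      have : (0 : EReal) ≤ sInf (S t) := le_sInf (hSnn t)
      rw [hbot] at this
      simp at this
  refine ⟨fun t => (sInf (S t)).toReal, ?_, ?_, ?_, ?_⟩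
  · intro t ht
    rw [hpiX t, EReal.coe_toReal (hfin t ht).1 (hfin t ht).2]
  · intro t ht
    have h0 : (0 : EReal) ≤ sInf (S t) := le_sInf (hSnn t)
    rw [← EReal.coe_toReal (hfin t ht).1 (hfin t ht).2] at h0
    exact_mod_cast h0
  · -- nonincreasing
    intro s t hs hst
    have hsub : S s ⊆ S t := by
      rintro y ⟨l, θ, hl, hθ, hRs, rfl⟩
      refine ⟨l, θ, hl, hθ, ?_, rfl⟩
      refine regOrder_trans_le hR (fun ω => ?_) hRs
      have hgle : g t (X ω) ≤ g s (X ω) := by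
        have := hgG 1 s s t zero_le_one le_rfl hs hs (by linarith) (X ω) (hXpos ω).le
        linarith
      gcongr
      exact (hmin ω).le
    have hle : sInf (S t) ≤ sInf (S s) := sInf_le_sInf hsub
    rw [← EReal.coe_toReal (hfin t (hs.trans hst)).1 (hfin t (hs.trans hst)).2,
      ← EReal.coe_toReal (hfin s hs).1 (hfin s hs).2] at hle
    exact_mod_cast hle
  · -- convexity
    refine ⟨convex_Ici 0, ?_⟩
    intro t₁ ht₁ t₂ ht₂ a b ha hb hab
    simp only [smul_eq_mul]
    rcases ha.eq_or_lt with rfl | ha'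
    · have hb1 : b = 1 := by linarith
      simp [hb1]
    rcases hb.eq_or_lt with rfl | hb'
    · have ha1 : a = 1 := by linarith
      simp [ha1]
    set t : ℝ := a * t₁ + b * t₂ with htdef
    have ht : 0 ≤ t := add_nonneg (mul_nonneg ha ht₁) (mul_nonneg hb ht₂)
    have ht₁' : (0:ℝ) ≤ t₁ := ht₁
    have ht₂' : (0:ℝ) ≤ t₂ := ht₂
    -- combination of hedges
    have hcomb : ∀ r₁ r₂ : ℝ, (r₁ : EReal) ∈ S t₁ → (r₂ : EReal) ∈ S t₂ →
        ((a * r₁ + b * r₂ : ℝ) : EReal) ∈ S t := by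
      rintro r₁ r₂ ⟨l₁, θ₁, hl₁, hθ₁, hR₁, hy₁⟩ ⟨l₂, θ₂, hl₂, hθ₂, hR₂, hy₂⟩
      have hr₁ : r₁ = l₁ * optCost qX θ₁ := by exact_mod_cast hy₁
      have hr₂ : r₂ = l₂ * optCost qX θ₂ := by exact_mod_cast hy₂
      set θ : ℝ →₀ ℝ := (a * l₁) • θ₁ + (b * l₂) • θ₂ with hθdef
      refine ⟨1, θ, one_pos, ⟨?_, ?_⟩, ?_, ?_⟩
      · -- support
        intro k hk
        have hk' : k ∈ θ.support := by exact_mod_cast hk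
        have := Finsupp.support_add hk'
        rcases Finset.mem_union.1 this with h | h
        · exact hθ₁.1 (Finset.mem_coe.2 (Finsupp.support_smul h))
        · exact hθ₂.1 (Finset.mem_coe.2 (Finsupp.support_smul h))
      · -- nonneg values
        intro k
        simp only [hθdef, Finsupp.add_apply, Finsupp.smul_apply, smul_eq_mul]
        have := hθ₁.2 k; have := hθ₂.2 k
        positivity
      · -- hedging relation
        have hC := hR.2.2.2.1 _ _ _ _ a b hR₁ hR₂ ha hb
        have hfeq : (a • (fun ω => l₁ * optPayoff X θ₁ ω / min (X ω) 1)
            + b • (fun ω => l₂ * optPayoff X θ₂ ω / min (X ω) 1))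
            = fun ω => 1 * optPayoff X θ ω / min (X ω) 1 := by
          funext ω
          simp only [Pi.add_apply, Pi.smul_apply, smul_eq_mul, hθdef,
            optPayoff_smul_add]
          ring
        rw [hfeq] at hC
        refine regOrder_trans_le hR (fun ω => ?_) hC
        simp only [Pi.add_apply, Pi.smul_apply, smul_eq_mul]
        have hgle : g t (X ω) ≤ a * g t₁ (X ω) + b * g t₂ (X ω) := by
          have hb' : 1 - a = b := by linarith
          have := hgG a t₁ t₂ t ha (by linarith) ht₁' ht₂'
            (by rw [hb']) (X ω) (hXpos ω).le
          rwa [hb'] at this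
        have heq : a * (g t₁ (X ω) / min (X ω) 1) + b * (g t₂ (X ω) / min (X ω) 1)
            = (a * g t₁ (X ω) + b * g t₂ (X ω)) / min (X ω) 1 := by ring
        rw [heq]
        gcongr
        exact (hmin ω).le
      · -- cost
        norm_cast
        rw [hθdef, optCost_smul_add, hr₁, hr₂]
        ring
    -- now pass to infima
    have key : ∀ ε : ℝ, 0 < ε →
        (sInf (S t)).toReal ≤ a * (sInf (S t₁)).toReal + b * (sInf (S t₂)).toReal + ε := by
      intro ε hε
      set F₁ := (sInf (S t₁)).toReal
      set F₂ := (sInf (S t₂)).toReal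
      have h₁ : sInf (S t₁) < ((F₁ + ε : ℝ) : EReal) := by
        rw [← EReal.coe_toReal (hfin t₁ ht₁').1 (hfin t₁ ht₁').2]
        exact_mod_cast lt_add_of_pos_right F₁ hε
      have h₂ : sInf (S t₂) < ((F₂ + ε : ℝ) : EReal) := by
        rw [← EReal.coe_toReal (hfin t₂ ht₂').1 (hfin t₂ ht₂').2]
        exact_mod_cast lt_add_of_pos_right F₂ hε
      obtain ⟨y₁, hy₁S, hy₁lt⟩ := sInf_lt_iff.1 h₁
      obtain ⟨y₂, hy₂S, hy₂lt⟩ := sInf_lt_iff.1 h₂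
      obtain ⟨l₁, θ₁, hl₁, hθ₁', hR₁, rfl⟩ := hy₁S
      obtain ⟨l₂, θ₂, hl₂, hθ₂', hR₂, rfl⟩ := hy₂S
      set r₁ : ℝ := l₁ * optCost qX θ₁
      set r₂ : ℝ := l₂ * optCost qX θ₂
      have hr₁lt : r₁ < F₁ + ε := by exact_mod_cast hy₁lt
      have hr₂lt : r₂ < F₂ + ε := by exact_mod_cast hy₂lt
      have hmem := hcomb r₁ r₂ ⟨l₁, θ₁, hl₁, hθ₁', hR₁, rfl⟩ ⟨l₂, θ₂, hl₂, hθ₂', hR₂, rfl⟩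
      have hle : sInf (S t) ≤ ((a * r₁ + b * r₂ : ℝ) : EReal) := sInf_le hmem
      rw [← EReal.coe_toReal (hfin t ht).1 (hfin t ht).2] at hle
      have hle' : (sInf (S t)).toReal ≤ a * r₁ + b * r₂ := by exact_mod_cast hle
      have : a * r₁ + b * r₂ ≤ a * (F₁ + ε) + b * (F₂ + ε) :=
        add_le_add (mul_le_mul_of_nonneg_left hr₁lt.le ha)
          (mul_le_mul_of_nonneg_left hr₂lt.le hb)
      nlinarith [hle']
    exact le_of_forall_pos_le_add fun ε hε => key ε hε
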